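/- Let s > 0, a > 0, and let h : ℝ → ℝ be continuous with support contained in (0,a). Define u(x) := (1/(2s))·∫₀^∞ (exp(−s·|x−t|) − exp(−s·(x+t)))·h(t) dt for x ≥ 0. Then for every x ≥ a: |u(x)| ≤ (√a·exp(s·a)/(2s))·exp(−s·x)·(∫₀^a h(t)² dt)^{1/2}. -/

import Mathlib

open MeasureTheory Real

set_option maxHeartbeats 1000000 in
lemma abs_integral_le_sqrt_mul_sqrt (a : ℝ) (ha : 0 < a) (h : ℝ → ℝ)
    (hcont : Continuous h) :
    (∫ t in Set.Ioo (0 : ℝ) a, |h t|) ≤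
      Real.sqrt a * Real.sqrt (∫ t in Set.Ioo (0 : ℝ) a, (h t) ^ 2) := by
  have hIabs : IntegrableOn (fun t => |h t|) (Set.Ioo 0 a) :=
    (hcont.abs.integrableOn_Icc).mono_set Set.Ioo_subset_Icc_self
  have hIsq : IntegrableOn (fun t => (h t) ^ 2) (Set.Ioo 0 a) :=
    ((hcont.pow 2).integrableOn_Icc).mono_set Set.Ioo_subset_Icc_self
  set I : ℝ := ∫ t in Set.Ioo (0 : ℝ) a, (h t) ^ 2 with hI
  have hInn : 0 ≤ I := setIntegral_nonneg measurableSet_Ioo (fun t _ => sq_nonneg _)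
  have tend : Filter.Tendsto (fun ε : ℝ => Real.sqrt a * Real.sqrt (I + ε))
      (nhdsWithin 0 (Set.Ioi 0)) (nhds (Real.sqrt a * Real.sqrt I)) := by
    have hc : Continuous fun ε : ℝ => Real.sqrt a * Real.sqrt (I + ε) := by fun_prop
    simpa using (hc.tendsto 0).mono_left nhdsWithin_le_nhds
  refine ge_of_tendsto tend ?_
  filter_upwards [self_mem_nhdsWithin] with ε hε
  have hε' : (0:ℝ) < ε := hε
  have hIe : (0:ℝ) < I + ε := by linarith
  set l : ℝ := Real.sqrt ((I + ε) / a) with hl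
  have hlpos : 0 < l := Real.sqrt_pos.2 (div_pos hIe ha)
  have hl2 : l ^ 2 = (I + ε) / a := Real.sq_sqrt (div_pos hIe ha).le
  have key : ∀ t, |h t| ≤ l / 2 + (h t) ^ 2 / (2 * l) := by
    intro t
    have h2 : 0 ≤ (l - |h t|) ^ 2 := sq_nonneg _
    rw [div_add_div _ _ (two_ne_zero) (by positivity), le_div_iff₀ (by positivity)]
    nlinarith [sq_abs (h t)]
  have hconst : IntegrableOn (fun _ : ℝ => l / 2) (Set.Ioo 0 a) :=
    integrableOn_const measure_Ioo_lt_top.ne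
  have s1 : (∫ t in Set.Ioo (0 : ℝ) a, |h t|)
      ≤ ∫ t in Set.Ioo (0 : ℝ) a, (l / 2 + (h t) ^ 2 / (2 * l)) :=
    setIntegral_mono_on hIabs (hconst.add (hIsq.div_const _)) measurableSet_Ioo
      (fun t _ => key t)
  have s2 : (∫ t in Set.Ioo (0 : ℝ) a, (l / 2 + (h t) ^ 2 / (2 * l)))
      = l / 2 * a + I / (2 * l) := by
    rw [integral_add hconst (hIsq.div_const _), setIntegral_const, integral_div]
    simp [Real.volume_Ioo, ENNReal.toReal_ofReal ha.le]
    rw [max_eq_left ha.le, ← hI]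
    ring
  have s3 : l / 2 * a + I / (2 * l) ≤ l / 2 * a + (I + ε) / (2 * l) := by
    gcongr; linarith
  have s4 : l / 2 * a + (I + ε) / (2 * l) = l * a := by
    have hIea : I + ε = l ^ 2 * a := by rw [hl2]; field_simp
    rw [hIea]
    field_simp
    ring
  have s5 : l * a = Real.sqrt a * Real.sqrt (I + ε) := by
    have hboth : (l * a) ^ 2 = (Real.sqrt a * Real.sqrt (I + ε)) ^ 2 := by
      rw [mul_pow, mul_pow, hl2, Real.sq_sqrt ha.le, Real.sq_sqrt hIe.le]
      field_simp
    calc l * a = Real.sqrt ((l * a) ^ 2) := (Real.sqrt_sq (by positivity)).symm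
      _ = Real.sqrt ((Real.sqrt a * Real.sqrt (I + ε)) ^ 2) := by rw [hboth]
      _ = Real.sqrt a * Real.sqrt (I + ε) := Real.sqrt_sq (by positivity)
  linarith [s1, s2 ▸ s1, s3, s4 ▸ s3, s5]

/-- Exponential decay bound for the half-line Green's function solution: for `x ≥ a`,
`|u(x)| ≤ (√a·e^{sa}/(2s))·e^{−sx}·(∫₀^a h²)^{1/2}`. -/
theorem halfline_green_function_decay_bound
    (s a : ℝ) (hs : 0 < s) (ha : 0 < a) (h : ℝ → ℝ) (hcont : Continuous h)
    (hsupp : Function.support h ⊆ Set.Ioo 0 a)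
    (u : ℝ → ℝ)
    (hu : ∀ x : ℝ, u x = (1 / (2 * s)) *
      ∫ t in Set.Ioi (0 : ℝ), (Real.exp (-(s * |x - t|)) - Real.exp (-(s * (x + t)))) * h t) :
    ∀ x : ℝ, a ≤ x →
      |u x| ≤ (Real.sqrt a * Real.exp (s * a) / (2 * s)) * Real.exp (-(s * x))
        * Real.sqrt (∫ t in Set.Ioo (0 : ℝ) a, (h t) ^ 2) := by
  intro x hx
  set f : ℝ → ℝ := fun t => (Real.exp (-(s * |x - t|)) - Real.exp (-(s * (x + t)))) * h t with hf
  have hcf : Continuous f := by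
    apply Continuous.mul _ hcont
    apply Continuous.sub
    · exact Real.continuous_exp.comp (by continuity)
    · exact Real.continuous_exp.comp (by continuity)
  have hzero : ∀ t, t ∉ Set.Ioo (0:ℝ) a → f t = 0 := by
    intro t ht
    have : h t = 0 := by
      by_contra hc
      exact ht (hsupp hc)
    simp [hf, this]
  have h1 : (∫ t in Set.Ioi (0:ℝ), f t) = ∫ t in Set.Ioo (0:ℝ) a, f t := by
    have e1 := setIntegral_eq_integral_of_forall_compl_eq_zero
      (μ := volume) (s := Set.Ioi (0:ℝ)) (f := f)
      (fun t ht => hzero t (fun hm => ht hm.1))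
    have e2 := setIntegral_eq_integral_of_forall_compl_eq_zero
      (μ := volume) (s := Set.Ioo (0:ℝ) a) (f := f) hzero
    rw [e1, ← e2]
  have hIf : IntegrableOn f (Set.Ioo 0 a) :=
    (hcf.integrableOn_Icc).mono_set Set.Ioo_subset_Icc_self
  have hIabs : IntegrableOn (fun t => Real.exp (s * a) * Real.exp (-(s * x)) * |h t|)
      (Set.Ioo 0 a) :=
    ((continuous_const.mul hcont.abs).integrableOn_Icc).mono_set Set.Ioo_subset_Icc_self
  have hbound : ∀ t ∈ Set.Ioo (0:ℝ) a, |f t| ≤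
      Real.exp (s * a) * Real.exp (-(s * x)) * |h t| := by
    intro t ht
    obtain ⟨ht0, hta⟩ := ht
    have habs : |x - t| = x - t := abs_of_nonneg (by linarith)
    have hK0 : 0 ≤ Real.exp (-(s * |x - t|)) - Real.exp (-(s * (x + t))) := by
      rw [habs]
      have : -(s * (x + t)) ≤ -(s * (x - t)) := by nlinarith
      linarith [Real.exp_le_exp.2 this]
    have hK1 : Real.exp (-(s * |x - t|)) - Real.exp (-(s * (x + t))) ≤
        Real.exp (s * a) * Real.exp (-(s * x)) := by
      rw [habs, ← Real.exp_add]
      have h2 : -(s * (x - t)) ≤ s * a + -(s * x) := by nlinarith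
      have := Real.exp_le_exp.2 h2
      have hpos : 0 < Real.exp (-(s * (x + t))) := Real.exp_pos _
      linarith
    rw [hf, abs_mul]
    apply mul_le_mul_of_nonneg_right _ (abs_nonneg _)
    rw [abs_of_nonneg hK0]
    exact hK1
  have hCS := abs_integral_le_sqrt_mul_sqrt a ha h hcont
  have keyint : |∫ t in Set.Ioi (0:ℝ), f t| ≤
      Real.exp (s * a) * Real.exp (-(s * x)) *
        (Real.sqrt a * Real.sqrt (∫ t in Set.Ioo (0:ℝ) a, (h t) ^ 2)) := by
    rw [h1]
    calc |∫ t in Set.Ioo (0:ℝ) a, f t|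
        ≤ ∫ t in Set.Ioo (0:ℝ) a, |f t| := by
          simpa using norm_integral_le_integral_norm (μ := volume.restrict (Set.Ioo 0 a)) f
      _ ≤ ∫ t in Set.Ioo (0:ℝ) a, Real.exp (s * a) * Real.exp (-(s * x)) * |h t| :=
          setIntegral_mono_on hIf.abs hIabs measurableSet_Ioo hbound
      _ = Real.exp (s * a) * Real.exp (-(s * x)) * ∫ t in Set.Ioo (0:ℝ) a, |h t| := by
          rw [integral_const_mul]
      _ ≤ _ := by
          apply mul_le_mul_of_nonneg_left hCS (by positivity)
  rw [hu x, abs_mul, abs_of_pos (by positivity : (0:ℝ) < 1 / (2 * s))]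
  calc (1 / (2 * s)) * |∫ t in Set.Ioi (0:ℝ), f t|
      ≤ (1 / (2 * s)) * (Real.exp (s * a) * Real.exp (-(s * x)) *
          (Real.sqrt a * Real.sqrt (∫ t in Set.Ioo (0:ℝ) a, (h t) ^ 2))) :=
        mul_le_mul_of_nonneg_left keyint (by positivity)
    _ = (Real.sqrt a * Real.exp (s * a) / (2 * s)) * Real.exp (-(s * x))
        * Real.sqrt (∫ t in Set.Ioo (0:ℝ) a, (h t) ^ 2) := by ring
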